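/- Let M be a real square Metzler matrix (all off-diagonal entries nonnegative) written in block form M = [[A, B], [C, D]] where A and D are square and A is invertible. Then M is Metzler stable (all eigenvalues have negative real part) if and only if A and the Schur complement D - C A⁻¹ B are both Metzler stable. -/

import Mathlib

set_option linter.unusedSectionVars false
set_option maxHeartbeats 1000000

open Matrix Filter Finset Topology

attribute [local instance]
  Matrix.linftyOpSeminormedAddCommGroup Matrix.linftyOpNormedAddCommGroup
  Matrix.linftyOpNonUnitalSemiNormedRing Matrix.linftyOpSemiNormedRing
  Matrix.linftyOpNormedRing Matrix.linftyOpNormedAlgebra Matrix.linftyOpNormedSpace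

namespace MetzlerAux

section EntrySigns

variable {a b c : Type*} [Fintype a] [Fintype b] [Fintype c]

lemma mul_nn {X : Matrix a b ℝ} {Y : Matrix b c ℝ} (hX : ∀ i j, 0 ≤ X i j)
    (hY : ∀ i j, 0 ≤ Y i j) : ∀ i j, 0 ≤ (X * Y) i j := fun i j =>
  Finset.sum_nonneg fun k _ => mul_nonneg (hX i k) (hY k j)

lemma mul_np {X : Matrix a b ℝ} {Y : Matrix b c ℝ} (hX : ∀ i j, 0 ≤ X i j)
    (hY : ∀ i j, Y i j ≤ 0) : ∀ i j, (X * Y) i j ≤ 0 := fun i j =>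
  Finset.sum_nonpos fun k _ => mul_nonpos_of_nonneg_of_nonpos (hX i k) (hY k j)

lemma mul_pn {X : Matrix a b ℝ} {Y : Matrix b c ℝ} (hX : ∀ i j, X i j ≤ 0)
    (hY : ∀ i j, 0 ≤ Y i j) : ∀ i j, (X * Y) i j ≤ 0 := fun i j =>
  Finset.sum_nonpos fun k _ => mul_nonpos_of_nonpos_of_nonneg (hX i k) (hY k j)

lemma mul_pp {X : Matrix a b ℝ} {Y : Matrix b c ℝ} (hX : ∀ i j, X i j ≤ 0)
    (hY : ∀ i j, Y i j ≤ 0) : ∀ i j, 0 ≤ (X * Y) i j := fun i j =>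
  Finset.sum_nonneg fun k _ => by nlinarith [hX i k, hY k j]

end EntrySigns

variable {p : Type*} [Fintype p] [DecidableEq p]

lemma pow_nn {X : Matrix p p ℝ} (hX : ∀ i j, 0 ≤ X i j) :
    ∀ (k : ℕ) i j, 0 ≤ (X ^ k) i j := by
  intro k
  induction k with
  | zero => intro i j; by_cases h : i = j <;> simp [pow_zero, Matrix.one_apply, h]
  | succ k ih => rw [pow_succ]; exact mul_nn ih hX

/-- complexification -/
noncomputable def cx (X : Matrix p p ℝ) : Matrix p p ℂ := X.map Complex.ofReal

lemma cx_pow (X : Matrix p p ℝ) (k : ℕ) : cx (X ^ k) = (cx X) ^ k := by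
  have := map_pow (Complex.ofRealHom.mapMatrix) X k
  exact this

lemma cx_entry_norm (X : Matrix p p ℝ) (i j : p) : ‖(cx X) i j‖ = |X i j| := by
  simp [cx, Matrix.map_apply, Complex.norm_real]

lemma entry_norm_le_norm (Y : Matrix p p ℂ) (i j : p) : ‖Y i j‖ ≤ ‖Y‖ := by
  rw [Matrix.linfty_opNorm_def]
  have h1 : ‖Y i j‖₊ ≤ ∑ k, ‖Y i k‖₊ :=
    Finset.single_le_sum (f := fun k => ‖Y i k‖₊) (fun _ _ => by positivity) (Finset.mem_univ j)
  have h2 : (∑ k, ‖Y i k‖₊) ≤ Finset.univ.sup fun i' => ∑ k, ‖Y i' k‖₊ :=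
    Finset.le_sup (f := fun i' => ∑ k, ‖Y i' k‖₊) (Finset.mem_univ i)
  exact_mod_cast h1.trans h2

lemma norm_le_entry_sum (Y : Matrix p p ℂ) : ‖Y‖ ≤ ∑ i, ∑ j, ‖Y i j‖ := by
  rw [Matrix.linfty_opNorm_def]
  have : (Finset.univ.sup fun i => ∑ k, ‖Y i k‖₊) ≤ ∑ i, ∑ j, ‖Y i j‖₊ := by
    apply Finset.sup_le
    intro i _
    exact Finset.single_le_sum (f := fun i' => ∑ j, ‖Y i' j‖₊) (fun _ _ => by positivity)
      (Finset.mem_univ i)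
  calc ((Finset.univ.sup fun i => ∑ k, ‖Y i k‖₊ : NNReal) : ℝ)
      ≤ ((∑ i, ∑ j, ‖Y i j‖₊ : NNReal) : ℝ) := by exact_mod_cast this
    _ = ∑ i, ∑ j, ‖Y i j‖ := by push_cast; rfl


section Core
variable {p : Type*} [Fintype p] [DecidableEq p]

lemma isUnit_smul_iff (z : ℂ) (hz : z ≠ 0) (W : Matrix p p ℂ) :
    IsUnit (z • W) ↔ IsUnit W := by
  rw [Matrix.isUnit_iff_isUnit_det, Matrix.isUnit_iff_isUnit_det, Matrix.det_smul,
    isUnit_iff_ne_zero, isUnit_iff_ne_zero, mul_ne_zero_iff]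
  simp [pow_ne_zero _ hz]

lemma spec_affine (N : Matrix p p ℝ) (c : ℝ) (hc : c ≠ 0) (μ : ℂ) :
    μ ∈ spectrum ℂ (cx N) ↔
      (μ + c) / c ∈ spectrum ℂ (cx (c⁻¹ • (N + c • (1 : Matrix p p ℝ)))) := by
  have hcℂ : (c : ℂ) ≠ 0 := by exact_mod_cast hc
  have key : algebraMap ℂ (Matrix p p ℂ) ((μ + c) / c)
      - cx (c⁻¹ • (N + c • (1 : Matrix p p ℝ)))
      = (c : ℂ)⁻¹ • (algebraMap ℂ (Matrix p p ℂ) μ - cx N) := by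
    ext i j
    simp only [Matrix.sub_apply, Matrix.algebraMap_matrix_apply, Matrix.smul_apply, cx,
      Matrix.map_apply, Matrix.add_apply, Matrix.one_apply, smul_eq_mul]
    rcases eq_or_ne i j with h | h
    · subst h
      simp only [if_pos rfl, Matrix.one_apply_eq]
      simp only [if_true, Algebra.algebraMap_self, RingHom.id_apply]
      push_cast
      field_simp
      try ring
    · simp only [if_neg h, Matrix.one_apply_ne h]
      push_cast
      ring
  rw [spectrum.mem_iff, spectrum.mem_iff, key,
    isUnit_smul_iff _ (inv_ne_zero hcℂ)]

lemma spec_norm_lt_one_of_bounded (X R : Matrix p p ℝ) (hX : ∀ i j, 0 ≤ X i j)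
    (hb : ∀ n i j, (∑ k ∈ Finset.range n, X ^ k) i j ≤ R i j) :
    ∀ μ ∈ spectrum ℂ (cx X), ‖μ‖ < 1 := by
  rcases isEmpty_or_nonempty p with hp | hp
  · intro μ hμ
    exact absurd (spectrum.mem_iff.mp hμ) (not_not.mpr (isUnit_of_subsingleton _))
  intro μ hμ
  by_contra hcon
  push_neg at hcon
  have hsum : ∀ i j, Summable fun k => (X ^ k) i j := fun i j =>
    summable_of_sum_range_le (fun k => pow_nn hX k i j)
      (fun n => by simpa [Matrix.sum_apply] using hb n i j)
  have hg : Summable fun k => ∑ i, ∑ j, (X ^ k) i j := by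
    exact summable_sum fun i _ => summable_sum fun j _ => hsum i j
  have hbound : ∀ k : ℕ, ‖μ‖ ^ (k + 1) ≤ ∑ i, ∑ j, (X ^ (k + 1)) i j := by
    intro k
    have hmem : μ ^ (k + 1) ∈ spectrum ℂ ((cx X) ^ (k + 1)) := by
      have h := spectrum.map_pow_of_pos (𝕜 := ℂ) (cx X) (n := k + 1) (by omega)
      rw [h]
      exact ⟨μ, hμ, rfl⟩
    calc ‖μ‖ ^ (k + 1) = ‖μ ^ (k + 1)‖ := (norm_pow _ _).symm
      _ ≤ ‖(cx X) ^ (k + 1)‖ := spectrum.norm_le_norm_of_mem hmem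
      _ = ‖cx (X ^ (k + 1))‖ := by rw [cx_pow]
      _ ≤ ∑ i, ∑ j, ‖cx (X ^ (k + 1)) i j‖ := norm_le_entry_sum _
      _ = ∑ i, ∑ j, (X ^ (k + 1)) i j := by
          refine Finset.sum_congr rfl fun i _ => Finset.sum_congr rfl fun j _ => ?_
          rw [cx_entry_norm, abs_of_nonneg (pow_nn hX _ i j)]
  have hsummable : Summable fun k : ℕ => ‖μ‖ ^ (k + 1) := by
    refine Summable.of_nonneg_of_le (fun k => by positivity) (fun k => hbound k) ?_
    exact (summable_nat_add_iff 1).mpr hg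
  have : Summable fun k : ℕ => ‖μ‖ ^ k := (summable_nat_add_iff 1).mp hsummable
  have hlt : ‖(‖μ‖ : ℝ)‖ < 1 := summable_geometric_iff_norm_lt_one.mp this
  rw [Real.norm_eq_abs, abs_of_nonneg (norm_nonneg μ)] at hlt
  exact absurd hlt (not_lt.mpr hcon)

lemma isUnit_one_sub_and_inv_nonneg (X : Matrix p p ℝ) (hX : ∀ i j, 0 ≤ X i j)
    (hs : ∀ μ ∈ spectrum ℂ (cx X), ‖μ‖ < 1) :
    IsUnit (1 - X) ∧ ∀ i j, 0 ≤ (1 - X)⁻¹ i j := by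
  rcases isEmpty_or_nonempty p with hp | hp
  · exact ⟨isUnit_of_subsingleton _, fun i j => isEmptyElim i⟩
  -- spectral radius < 1
  have hρ : spectralRadius ℂ (cx X) < ((1 : NNReal) : ENNReal) := by
    refine spectrum.spectralRadius_lt_of_forall_lt _ fun z hz => ?_
    rw [← NNReal.coe_lt_coe]
    simpa using hs z hz
  obtain ⟨t, ht1, ht2⟩ := exists_between hρ
  have htne : t ≠ ⊤ := ne_top_of_lt ht2
  set t' : NNReal := t.toNNReal with ht'
  have htt' : t = (t' : ENNReal) := (ENNReal.coe_toNNReal htne).symm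
  have ht'1 : (t' : ℝ) < 1 := by
    have := ht2
    rw [htt'] at this
    exact_mod_cast this
  have ht'0 : (0 : ℝ) ≤ t' := t'.2
  -- Gelfand formula gives eventual norm bound
  have htend := spectrum.pow_nnnorm_pow_one_div_tendsto_nhds_spectralRadius (cx X)
  have hev : ∀ᶠ n : ℕ in atTop, (‖(cx X) ^ n‖₊ : ENNReal) ^ (1 / (n : ℝ)) < t :=
    htend.eventually_lt_const ht1
  obtain ⟨N₀, hN₀⟩ := Filter.eventually_atTop.mp hev
  set N₁ := max N₀ 1 with hN₁
  have hnormle : ∀ n, N₁ ≤ n → ‖(cx X) ^ n‖ ≤ (t' : ℝ) ^ n := by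
    intro n hn
    have hn1 : 1 ≤ n := le_trans (le_max_right _ _) hn
    have hnn : (n : ℝ) ≠ 0 := by positivity
    have h1 := hN₀ n (le_trans (le_max_left _ _) hn)
    rw [htt', ← ENNReal.coe_rpow_of_nonneg _ (by positivity : (0:ℝ) ≤ 1 / (n:ℝ)),
      ENNReal.coe_lt_coe] at h1
    have h2 : ‖(cx X) ^ n‖₊ ≤ t' ^ (n : ℝ) :=
      (NNReal.rpow_inv_le_iff (by positivity : (0:ℝ) < (n:ℝ))).mp (by rw [← one_div]; exact h1.le)
    have h4 : ((‖(cx X) ^ n‖₊ : ℝ)) ≤ ((t' ^ (n : ℝ) : NNReal) : ℝ) := by exact_mod_cast h2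
    rw [NNReal.coe_rpow, Real.rpow_natCast] at h4
    exact h4
  -- summability of norms of powers
  have hsumnorm : Summable fun n => ‖(cx X) ^ n‖ := by
    rw [← summable_nat_add_iff N₁]
    refine Summable.of_nonneg_of_le (fun n => norm_nonneg _)
      (fun n => hnormle (n + N₁) (Nat.le_add_left _ _)) ?_
    have : Summable fun n : ℕ => (t' : ℝ) ^ n := summable_geometric_of_lt_one ht'0 ht'1
    exact ((summable_nat_add_iff N₁).mpr this)
  -- entrywise summability
  have hE : ∀ i j, Summable fun k => (X ^ k) i j := by
    intro i j
    refine Summable.of_abs (Summable.of_nonneg_of_le (fun k => abs_nonneg _) (fun k => ?_) hsumnorm)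
    calc |(X ^ k) i j| = ‖cx (X ^ k) i j‖ := (cx_entry_norm _ i j).symm
      _ = ‖((cx X) ^ k) i j‖ := by rw [cx_pow]
      _ ≤ ‖(cx X) ^ k‖ := entry_norm_le_norm _ i j
  have hE0 : ∀ i j, Tendsto (fun k => (X ^ k) i j) atTop (𝓝 0) := fun i j =>
    (hE i j).tendsto_atTop_zero
  set T : Matrix p p ℝ := Matrix.of fun i j => ∑' k, (X ^ k) i j with hT
  -- telescoping has-sum
  have htel : ∀ i j, HasSum (fun k => (X ^ k) i j - (X ^ (k + 1)) i j)
      ((1 : Matrix p p ℝ) i j) := by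
    intro i j
    have hsummable : Summable fun k => (X ^ k) i j - (X ^ (k + 1)) i j :=
      (hE i j).sub ((summable_nat_add_iff 1).mpr (hE i j))
    rw [hsummable.hasSum_iff_tendsto_nat]
    have heq : ∀ n : ℕ, (∑ k ∈ Finset.range n, ((X ^ k) i j - (X ^ (k + 1)) i j))
        = (1 : Matrix p p ℝ) i j - (X ^ n) i j := by
      intro n
      rw [Finset.sum_range_sub' (f := fun k => (X ^ k) i j)]
      simp [pow_zero]
    simp only [heq]
    simpa using tendsto_const_nhds.sub (hE0 i j)
  have h1 : (1 - X) * T = 1 := by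
    ext i j
    have : ((1 - X) * T) i j = ∑' k, (((1 - X) : Matrix p p ℝ) * X ^ k) i j := by
      rw [Matrix.mul_apply]
      have : ∀ u, (1 - X : Matrix p p ℝ) i u * T u j
          = ∑' k, (1 - X : Matrix p p ℝ) i u * (X ^ k) u j := by
        intro u
        rw [hT]
        exact (tsum_mul_left).symm
      rw [Finset.sum_congr rfl fun u _ => this u]
      rw [← Summable.tsum_finsetSum (fun u _ => ((hE u j).mul_left _))]
      try congr 1
      try ext k
      try rw [Matrix.mul_apply]
    rw [this]
    have heq : ∀ k : ℕ, (((1 - X) : Matrix p p ℝ) * X ^ k) i j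
        = (X ^ k) i j - (X ^ (k + 1)) i j := by
      intro k
      rw [Matrix.sub_mul, Matrix.one_mul, ← pow_succ']
      simp [Matrix.sub_apply]
    simp only [heq]
    exact (htel i j).tsum_eq
  have h2 : T * (1 - X) = 1 := by
    ext i j
    have : (T * (1 - X)) i j = ∑' k, ((X ^ k * (1 - X)) : Matrix p p ℝ) i j := by
      rw [Matrix.mul_apply]
      have : ∀ u, T i u * (1 - X : Matrix p p ℝ) u j
          = ∑' k, (X ^ k) i u * (1 - X : Matrix p p ℝ) u j := by
        intro u
        rw [hT]
        exact (tsum_mul_right).symm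
      rw [Finset.sum_congr rfl fun u _ => this u]
      rw [← Summable.tsum_finsetSum (fun u _ => ((hE i u).mul_right _))]
      try congr 1
      try ext k
      try rw [Matrix.mul_apply]
    rw [this]
    have heq : ∀ k : ℕ, ((X ^ k * (1 - X)) : Matrix p p ℝ) i j
        = (X ^ k) i j - (X ^ (k + 1)) i j := by
      intro k
      rw [Matrix.mul_sub, Matrix.mul_one, ← pow_succ]
      simp [Matrix.sub_apply]
    simp only [heq]
    exact (htel i j).tsum_eq
  refine ⟨⟨⟨1 - X, T, h1, h2⟩, rfl⟩, ?_⟩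
  rw [Matrix.inv_eq_right_inv h1]
  intro i j
  exact tsum_nonneg fun k => pow_nn hX k i j

end Core
section Char
variable {p : Type*} [Fintype p] [DecidableEq p]

/-- sum of absolute values of all entries -/
noncomputable def entrySum (N : Matrix p p ℝ) : ℝ := ∑ i, ∑ j, |N i j|

lemma entrySum_nonneg (N : Matrix p p ℝ) : 0 ≤ entrySum N :=
  Finset.sum_nonneg fun i _ => Finset.sum_nonneg fun j _ => abs_nonneg _

lemma neg_diag_le_entrySum (N : Matrix p p ℝ) (i : p) : -N i i ≤ entrySum N := by
  have h1 : |N i i| ≤ entrySum N := by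
    have h2 : |N i i| ≤ ∑ j, |N i j| :=
      Finset.single_le_sum (f := fun j => |N i j|) (fun _ _ => abs_nonneg _) (Finset.mem_univ i)
    refine h2.trans ?_
    exact Finset.single_le_sum (f := fun i' => ∑ j, |N i' j|)
      (fun _ _ => Finset.sum_nonneg fun _ _ => abs_nonneg _) (Finset.mem_univ i)
  linarith [neg_abs_le (N i i)]

lemma shifted_nonneg (N : Matrix p p ℝ) (hMz : ∀ i j, i ≠ j → 0 ≤ N i j) (c : ℝ)
    (hc0 : 0 < c) (hc : entrySum N + 1 ≤ c) :
    ∀ i j, 0 ≤ (c⁻¹ • (N + c • (1 : Matrix p p ℝ))) i j := by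
  intro i j
  have hci : 0 ≤ c⁻¹ := by positivity
  rcases eq_or_ne i j with h | h
  · subst h
    have := neg_diag_le_entrySum N i
    simp only [Matrix.smul_apply, Matrix.add_apply, Matrix.one_apply_eq, smul_eq_mul]
    have : 0 ≤ N i i + c * 1 := by nlinarith
    positivity
  · simp only [Matrix.smul_apply, Matrix.add_apply, Matrix.one_apply_ne h, smul_eq_mul]
    have := hMz i j h
    nlinarith

lemma isUnit_smul_iff_real (z : ℝ) (hz : z ≠ 0) (W : Matrix p p ℝ) :
    IsUnit (z • W) ↔ IsUnit W := by
  rw [Matrix.isUnit_iff_isUnit_det, Matrix.isUnit_iff_isUnit_det, Matrix.det_smul,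
    isUnit_iff_ne_zero, isUnit_iff_ne_zero, mul_ne_zero_iff]
  simp [pow_ne_zero _ hz]

lemma inv_smul_real (a : ℝ) (ha : a ≠ 0) (M : Matrix p p ℝ) (hM : IsUnit M) :
    (a • M)⁻¹ = a⁻¹ • M⁻¹ := by
  apply Matrix.inv_eq_right_inv
  rw [Matrix.smul_mul, Matrix.mul_smul, smul_smul,
    Matrix.mul_nonsing_inv M ((Matrix.isUnit_iff_isUnit_det M).mp hM), mul_inv_cancel₀ ha, one_smul]

lemma re_neg_of_norm_add_lt (μ : ℂ) (c : ℝ) (hc : 0 < c) (h : ‖μ + c‖ < c) : μ.re < 0 := by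
  have h0 : 0 ≤ ‖μ + (c : ℂ)‖ := norm_nonneg _
  have h2 : ‖μ + (c : ℂ)‖ ^ 2 < c ^ 2 := by nlinarith
  have h3 : ‖μ + (c : ℂ)‖ ^ 2 = (μ.re + c) ^ 2 + μ.im ^ 2 := by
    rw [Complex.sq_norm, Complex.normSq_apply]
    simp [Complex.add_re, Complex.add_im]
    try ring
  nlinarith

lemma norm_affine_lt_one (μ : ℂ) (c : ℝ) (hc : 0 < c) :
    ‖(μ + c) / c‖ < 1 ↔ ‖μ + (c : ℂ)‖ < c := by
  rw [norm_div]
  have : ‖((c : ℝ) : ℂ)‖ = c := by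
    rw [Complex.norm_real, Real.norm_eq_abs, abs_of_pos hc]
  rw [this, div_lt_one hc]


lemma partial_sums_le (N : Matrix p p ℝ) (hU : IsUnit N) (hIn : ∀ i j, N⁻¹ i j ≤ 0)
    (c : ℝ) (hc0 : 0 < c)
    (hX : ∀ i j, 0 ≤ (c⁻¹ • (N + c • (1 : Matrix p p ℝ))) i j) :
    ∀ nn i j, (∑ k ∈ Finset.range nn, (c⁻¹ • (N + c • (1 : Matrix p p ℝ))) ^ k) i j
      ≤ (c • (-N⁻¹)) i j := by
  set X : Matrix p p ℝ := c⁻¹ • (N + c • (1 : Matrix p p ℝ)) with hXdef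
  set R₀ : Matrix p p ℝ := -N⁻¹ with hR₀def
  have hR₀ : ∀ i j, 0 ≤ R₀ i j := by
    intro i j
    simp only [hR₀def, Matrix.neg_apply]
    linarith [hIn i j]
  have hNN : N * N⁻¹ = 1 := Matrix.mul_nonsing_inv N ((Matrix.isUnit_iff_isUnit_det N).mp hU)
  have hXNi : X * N⁻¹ = c⁻¹ • (1 : Matrix p p ℝ) + N⁻¹ := by
    rw [hXdef, Matrix.smul_mul, Matrix.add_mul, hNN, Matrix.smul_mul, Matrix.one_mul,
      smul_add, smul_smul, inv_mul_cancel₀ hc0.ne', one_smul]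
  have hid : R₀ = X * R₀ + c⁻¹ • (1 : Matrix p p ℝ) := by
    rw [hR₀def, Matrix.mul_neg, hXNi]
    abel
  have hind : ∀ nn : ℕ, R₀ = c⁻¹ • (∑ k ∈ Finset.range nn, X ^ k) + X ^ nn * R₀ := by
    intro nn
    induction nn with
    | zero => simp
    | succ n ih =>
      have hstep : X ^ n * R₀ = c⁻¹ • X ^ n + X ^ (n + 1) * R₀ := by
        calc X ^ n * R₀ = X ^ n * (X * R₀ + c⁻¹ • (1 : Matrix p p ℝ)) := by rw [← hid]
          _ = X ^ n * (X * R₀) + X ^ n * (c⁻¹ • (1 : Matrix p p ℝ)) := by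
              rw [Matrix.mul_add]
          _ = c⁻¹ • X ^ n + X ^ (n + 1) * R₀ := by
              rw [Matrix.mul_smul, Matrix.mul_one, ← Matrix.mul_assoc, ← pow_succ]
              abel
      calc R₀ = c⁻¹ • (∑ k ∈ Finset.range n, X ^ k) + X ^ n * R₀ := ih
        _ = c⁻¹ • (∑ k ∈ Finset.range n, X ^ k)
            + (c⁻¹ • X ^ n + X ^ (n + 1) * R₀) := by rw [hstep]
        _ = c⁻¹ • (∑ k ∈ Finset.range (n + 1), X ^ k) + X ^ (n + 1) * R₀ := by
            rw [Finset.sum_range_succ, smul_add]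
            abel
  intro nn i j
  have h1 := congrFun (congrFun (hind nn) i) j
  simp only [Matrix.add_apply, Matrix.smul_apply, smul_eq_mul] at h1
  have h2 : 0 ≤ (X ^ nn * R₀) i j := mul_nn (pow_nn hX nn) hR₀ i j
  simp only [Matrix.smul_apply, smul_eq_mul]
  have h3 : c⁻¹ * (∑ k ∈ Finset.range nn, X ^ k) i j ≤ R₀ i j := by linarith
  calc (∑ k ∈ Finset.range nn, X ^ k) i j
      = c * (c⁻¹ * (∑ k ∈ Finset.range nn, X ^ k) i j) := by
        field_simp
    _ ≤ c * R₀ i j := mul_le_mul_of_nonneg_left h3 hc0.le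

theorem stable_iff (N : Matrix p p ℝ) (hMz : ∀ i j, i ≠ j → 0 ≤ N i j) :
    (∀ μ ∈ spectrum ℂ (cx N), μ.re < 0) ↔ (IsUnit N ∧ ∀ i j, N⁻¹ i j ≤ 0) := by
  constructor
  · intro h
    rcases isEmpty_or_nonempty p with hp | hp
    · refine ⟨?_, fun i j => isEmptyElim i⟩
      rw [Matrix.isUnit_iff_isUnit_det, Matrix.det_isEmpty]
      exact isUnit_one
    haveI : Nontrivial (Matrix p p ℂ) := inferInstance
    have hne : (spectrum ℂ (cx N)).Nonempty := spectrum.nonempty (cx N)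
    have hcpt : IsCompact (spectrum ℂ (cx N)) := spectrum.isCompact (cx N)
    obtain ⟨μ₀, hμ₀, hmax⟩ := hcpt.exists_isMaxOn hne Complex.continuous_re.continuousOn
    set δ : ℝ := -μ₀.re with hδdef
    have hδ : 0 < δ := by
      have := h μ₀ hμ₀
      simp only [hδdef]
      linarith
    set K : ℝ := ‖cx N‖ with hKdef
    have hK0 : 0 ≤ K := norm_nonneg _
    set c : ℝ := max (entrySum N + 1) (K ^ 2 / (2 * δ) + 1) with hcdef
    have hc0 : 0 < c := by
      have : (0:ℝ) < K ^ 2 / (2 * δ) + 1 := by positivity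
      exact lt_of_lt_of_le this (le_max_right _ _)
    set X : Matrix p p ℝ := c⁻¹ • (N + c • (1 : Matrix p p ℝ)) with hXdef
    have hX : ∀ i j, 0 ≤ X i j :=
      shifted_nonneg N hMz c hc0 (le_max_left _ _)
    have hs : ∀ ζ ∈ spectrum ℂ (cx X), ‖ζ‖ < 1 := by
      intro ζ hζ
      set μ : ℂ := c * ζ - c with hμdef
      have hζμ : (μ + c) / c = ζ := by
        have hcc : (c : ℂ) ≠ 0 := by exact_mod_cast hc0.ne'
        field_simp [hμdef]
        rw [hμdef]; ring
      have hμmem : μ ∈ spectrum ℂ (cx N) := by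
        rw [spec_affine N c hc0.ne' μ, hζμ]
        exact hζ
      have hre : μ.re ≤ -δ := by
        have h5 := hmax hμmem
        simp only [Set.mem_setOf_eq] at h5
        simp only [hδdef]
        linarith
      have hnorm : ‖μ‖ ≤ K := spectrum.norm_le_norm_of_mem hμmem
      have hcK : K ^ 2 / (2 * δ) + 1 ≤ c := le_max_right _ _
      have hlt : ‖μ + (c : ℂ)‖ < c := by
        have ha : μ.re ^ 2 + μ.im ^ 2 ≤ K ^ 2 := by
          have : ‖μ‖ ^ 2 = μ.re ^ 2 + μ.im ^ 2 := by
            rw [Complex.sq_norm, Complex.normSq_apply]; ring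
          nlinarith [norm_nonneg μ, hnorm, hK0]
        have hsq : ‖μ + (c : ℂ)‖ ^ 2 = (μ.re + c) ^ 2 + μ.im ^ 2 := by
          rw [Complex.sq_norm, Complex.normSq_apply]
          simp [Complex.add_re, Complex.add_im]
          try ring
        have h2cδ : K ^ 2 + 2 * δ ≤ 2 * δ * c := by
          have := mul_le_mul_of_nonneg_left hcK (by positivity : (0:ℝ) ≤ 2 * δ)
          calc K ^ 2 + 2 * δ = 2 * δ * (K ^ 2 / (2 * δ) + 1) := by field_simp; try ring
            _ ≤ 2 * δ * c := this
        have : ‖μ + (c : ℂ)‖ ^ 2 < c ^ 2 := by nlinarith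
        exact lt_of_pow_lt_pow_left₀ 2 hc0.le this
      rw [← hζμ, norm_affine_lt_one μ c hc0]
      exact hlt
    obtain ⟨hU1, hInv1⟩ := isUnit_one_sub_and_inv_nonneg X hX hs
    have hcX : c • X = N + c • (1 : Matrix p p ℝ) := by
      rw [hXdef, smul_smul, mul_inv_cancel₀ hc0.ne', one_smul]
    have hNfact : N = (-c) • ((1 : Matrix p p ℝ) - X) := by
      rw [neg_smul, smul_sub, hcX]
      abel
    constructor
    · rw [hNfact, isUnit_smul_iff_real _ (by linarith : -c ≠ (0:ℝ))]
      exact hU1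
    · intro i j
      rw [hNfact, inv_smul_real _ (by linarith : -c ≠ (0:ℝ)) _ hU1]
      simp only [Matrix.smul_apply, smul_eq_mul]
      have hneg : (-c)⁻¹ ≤ 0 := by
        rw [inv_nonpos]
        linarith
      exact mul_nonpos_of_nonpos_of_nonneg hneg (hInv1 i j)
  · rintro ⟨hU, hIn⟩ μ hμ
    set c : ℝ := entrySum N + 1 with hcdef
    have hc0 : 0 < c := by
      have := entrySum_nonneg N
      simp only [hcdef]; linarith
    set X : Matrix p p ℝ := c⁻¹ • (N + c • (1 : Matrix p p ℝ)) with hXdef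
    have hX : ∀ i j, 0 ≤ X i j := shifted_nonneg N hMz c hc0 le_rfl
    have hb := partial_sums_le N hU hIn c hc0 (by rw [← hXdef] at *; exact hX)
    have hb' : ∀ nn i j, (∑ k ∈ Finset.range nn, X ^ k) i j ≤ (c • (-N⁻¹)) i j := by
      intro nn i j
      have := hb nn i j
      rw [← hXdef] at this
      exact this
    have hs := spec_norm_lt_one_of_bounded X (c • (-N⁻¹)) hX hb'
    have hζ : (μ + c) / c ∈ spectrum ℂ (cx X) := by
      rw [← spec_affine N c hc0.ne' μ]
      exact hμ
    have := hs _ hζ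
    rw [norm_affine_lt_one μ c hc0] at this
    exact re_neg_of_norm_add_lt μ c hc0 this

end Char
section Blocks
variable {m n : Type*} [Fintype m] [Fintype n] [DecidableEq m] [DecidableEq n]

lemma block_pow_le (W : Matrix m m ℝ) (B₀ : Matrix m n ℝ) (C₀ : Matrix n m ℝ)
    (D₀ : Matrix n n ℝ) (hnn : ∀ i j, 0 ≤ (Matrix.fromBlocks W B₀ C₀ D₀) i j) :
    ∀ (k : ℕ) i j, (W ^ k) i j ≤ ((Matrix.fromBlocks W B₀ C₀ D₀) ^ k) (Sum.inl i) (Sum.inl j) := by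
  have hW : ∀ i j, 0 ≤ W i j := fun i j => hnn (Sum.inl i) (Sum.inl j)
  intro k
  induction k with
  | zero =>
    intro i j
    simp only [pow_zero, Matrix.one_apply, Sum.inl.injEq]
    rcases eq_or_ne i j with h | h <;> simp [h]
  | succ k ih =>
    intro i j
    rw [pow_succ', pow_succ', Matrix.mul_apply, Matrix.mul_apply, Fintype.sum_sum_type]
    have h1 : ∑ u : m, W i u * (W ^ k) u j
        ≤ ∑ u : m, (Matrix.fromBlocks W B₀ C₀ D₀) (Sum.inl i) (Sum.inl u)
          * ((Matrix.fromBlocks W B₀ C₀ D₀) ^ k) (Sum.inl u) (Sum.inl j) := by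
      refine Finset.sum_le_sum fun u _ => ?_
      rw [Matrix.fromBlocks_apply₁₁]
      exact mul_le_mul_of_nonneg_left (ih u j) (hW i u)
    have h2 : 0 ≤ ∑ v : n, (Matrix.fromBlocks W B₀ C₀ D₀) (Sum.inl i) (Sum.inr v)
        * ((Matrix.fromBlocks W B₀ C₀ D₀) ^ k) (Sum.inr v) (Sum.inl j) :=
      Finset.sum_nonneg fun v _ =>
        mul_nonneg (hnn (Sum.inl i) (Sum.inr v)) (pow_nn hnn k (Sum.inr v) (Sum.inl j))
    linarith

lemma entrySum_block_le (A : Matrix m m ℝ) (B : Matrix m n ℝ) (C : Matrix n m ℝ)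
    (D : Matrix n n ℝ) : entrySum A ≤ entrySum (Matrix.fromBlocks A B C D) := by
  unfold entrySum
  rw [Fintype.sum_sum_type]
  have h1 : ∀ i : m, ∑ j : m, |A i j| ≤ ∑ j : m ⊕ n, |(Matrix.fromBlocks A B C D) (Sum.inl i) j| := by
    intro i
    rw [Fintype.sum_sum_type]
    have : ∑ j : m, |A i j| = ∑ j : m, |(Matrix.fromBlocks A B C D) (Sum.inl i) (Sum.inl j)| := by
      simp [Matrix.fromBlocks_apply₁₁]
    rw [this]
    have h2 : 0 ≤ ∑ j : n, |(Matrix.fromBlocks A B C D) (Sum.inl i) (Sum.inr j)| :=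
      Finset.sum_nonneg fun _ _ => abs_nonneg _
    linarith
  have h3 : ∑ i : m, ∑ j : m, |A i j|
      ≤ ∑ i : m, ∑ j : m ⊕ n, |(Matrix.fromBlocks A B C D) (Sum.inl i) j| :=
    Finset.sum_le_sum fun i _ => h1 i
  have h4 : 0 ≤ ∑ i : n, ∑ j : m ⊕ n, |(Matrix.fromBlocks A B C D) (Sum.inr i) j| :=
    Finset.sum_nonneg fun _ _ => Finset.sum_nonneg fun _ _ => abs_nonneg _
  linarith

end Blocks
end MetzlerAux

open MetzlerAux

/-- Kamgang–Sallet block criterion: a Metzler matrix `M = [[A, B], [C, D]]` with `A`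
invertible is Metzler stable (all eigenvalues with negative real part) iff `A` and
the Schur complement `D - C A⁻¹ B` are both Metzler stable. -/
theorem metzler_block_stability {m n : Type*} [Fintype m] [Fintype n]
    [DecidableEq m] [DecidableEq n]
    (A : Matrix m m ℝ) (B : Matrix m n ℝ) (C : Matrix n m ℝ) (D : Matrix n n ℝ)
    (hMetzler : ∀ i j, i ≠ j → 0 ≤ (Matrix.fromBlocks A B C D) i j)
    (hA : IsUnit A) :
    ((∀ μ ∈ spectrum ℂ ((Matrix.fromBlocks A B C D).map (Complex.ofReal)),
        μ.re < 0) ↔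
      ((∀ μ ∈ spectrum ℂ (A.map (Complex.ofReal)), μ.re < 0) ∧
       (∀ μ ∈ spectrum ℂ ((D - C * A⁻¹ * B).map (Complex.ofReal)), μ.re < 0))) := by
  classical
  set M : Matrix (m ⊕ n) (m ⊕ n) ℝ := Matrix.fromBlocks A B C D with hMdef
  set S : Matrix n n ℝ := D - C * A⁻¹ * B with hSdef
  have hMzM : ∀ i j, i ≠ j → 0 ≤ M i j := hMetzler
  have hB : ∀ i j, 0 ≤ B i j := fun i j =>
    hMetzler (Sum.inl i) (Sum.inr j) (by simp)
  have hC : ∀ i j, 0 ≤ C i j := fun i j =>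
    hMetzler (Sum.inr i) (Sum.inl j) (by simp)
  have hAz : ∀ i j, i ≠ j → 0 ≤ A i j := fun i j hij => by
    simpa [hMdef] using hMetzler (Sum.inl i) (Sum.inl j) (by simpa using hij)
  have hDz : ∀ i j, i ≠ j → 0 ≤ D i j := fun i j hij => by
    simpa [hMdef] using hMetzler (Sum.inr i) (Sum.inr j) (by simpa using hij)
  obtain ⟨iA⟩ := hA.nonempty_invertible
  letI := iA
  have hiA : ⅟A = A⁻¹ := Matrix.invOf_eq_nonsing_inv A
  have hSz : (∀ i j, A⁻¹ i j ≤ 0) → ∀ i j, i ≠ j → 0 ≤ S i j := by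
    intro hAinv i j hij
    have h1 : (C * A⁻¹ * B) i j ≤ 0 := mul_pn (mul_np hC hAinv) hB i j
    have h2 := hDz i j hij
    simp only [hSdef, Matrix.sub_apply]
    linarith
  constructor
  · intro hM
    obtain ⟨hUM, hMinv⟩ := (stable_iff M hMzM).mp hM
    -- Stability of A (principal submatrix)
    have hAstable : ∀ μ ∈ spectrum ℂ (cx A), μ.re < 0 := by
      set c : ℝ := entrySum M + 1 with hcdef
      have hc0 : 0 < c := by
        have := entrySum_nonneg M
        simp only [hcdef]
        linarith
      have hXMnn : ∀ i j, 0 ≤ (c⁻¹ • (M + c • (1 : Matrix (m ⊕ n) (m ⊕ n) ℝ))) i j :=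
        shifted_nonneg M hMzM c hc0 le_rfl
      have hbM := partial_sums_le M hUM hMinv c hc0 hXMnn
      set XA : Matrix m m ℝ := c⁻¹ • (A + c • (1 : Matrix m m ℝ)) with hXAdef
      have hXAnn : ∀ i j, 0 ≤ XA i j := by
        refine shifted_nonneg A hAz c hc0 ?_
        have := entrySum_block_le A B C D
        simp only [hcdef]
        rw [← hMdef] at this
        linarith
      have hXMblocks : c⁻¹ • (M + c • (1 : Matrix (m ⊕ n) (m ⊕ n) ℝ))
          = Matrix.fromBlocks XA (c⁻¹ • B) (c⁻¹ • C) (c⁻¹ • (D + c • (1 : Matrix n n ℝ))) := by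
        rw [hMdef, ← Matrix.fromBlocks_one (l := m) (m := n) (α := ℝ), Matrix.fromBlocks_smul,
          Matrix.fromBlocks_add, Matrix.fromBlocks_smul]
        simp [hXAdef]
      have hpow := block_pow_le XA (c⁻¹ • B) (c⁻¹ • C) (c⁻¹ • (D + c • (1 : Matrix n n ℝ)))
        (by rw [← hXMblocks]; exact hXMnn)
      set RA : Matrix m m ℝ := Matrix.of fun i j =>
        (c • (-M⁻¹)) (Sum.inl i) (Sum.inl j) with hRAdef
      have hbA : ∀ nn i j, (∑ k ∈ Finset.range nn, XA ^ k) i j ≤ RA i j := by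
        intro nn i j
        have h1 : (∑ k ∈ Finset.range nn, XA ^ k) i j = ∑ k ∈ Finset.range nn, (XA ^ k) i j :=
          Matrix.sum_apply _ _ _ _
        have h2 : (∑ k ∈ Finset.range nn, (c⁻¹ • (M + c • (1 : Matrix (m ⊕ n) (m ⊕ n) ℝ))) ^ k)
            (Sum.inl i) (Sum.inl j)
            = ∑ k ∈ Finset.range nn, ((c⁻¹ • (M + c • (1 : Matrix (m ⊕ n) (m ⊕ n) ℝ))) ^ k)
              (Sum.inl i) (Sum.inl j) := Matrix.sum_apply _ _ _ _
        have h3 : ∑ k ∈ Finset.range nn, (XA ^ k) i j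
            ≤ ∑ k ∈ Finset.range nn, ((c⁻¹ • (M + c • (1 : Matrix (m ⊕ n) (m ⊕ n) ℝ))) ^ k)
              (Sum.inl i) (Sum.inl j) := by
          refine Finset.sum_le_sum fun k _ => ?_
          rw [hXMblocks]
          exact hpow k i j
        have h4 := hbM nn (Sum.inl i) (Sum.inl j)
        rw [h2] at h4
        rw [h1, hRAdef]
        exact le_trans h3 h4
      have hsA := spec_norm_lt_one_of_bounded XA RA hXAnn hbA
      intro μ hμ
      have hζ := (spec_affine A c hc0.ne' μ).mp hμ
      rw [← hXAdef] at hζ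
      exact re_neg_of_norm_add_lt μ c hc0 ((norm_affine_lt_one μ c hc0).mp (hsA _ hζ))
    obtain ⟨hUA, hAinv⟩ := (stable_iff A hAz).mp hAstable
    have hSzz := hSz hAinv
    have hUS' : IsUnit (D - C * ⅟A * B) := by
      exact (Matrix.isUnit_fromBlocks_iff_of_invertible₁₁ (A := A)).mp hUM
    have hUS : IsUnit S := by
      rw [hSdef, ← hiA]
      exact hUS'
    obtain ⟨iM⟩ := hUM.nonempty_invertible
    letI : Invertible (Matrix.fromBlocks A B C D) := iM
    obtain ⟨iS'⟩ := hUS'.nonempty_invertible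
    letI := iS'
    have hSinvOf : ⅟(D - C * ⅟A * B) = S⁻¹ := by
      rw [Matrix.invOf_eq_nonsing_inv, hSdef, hiA]
    have hSinv : ∀ i j, S⁻¹ i j ≤ 0 := by
      intro i j
      have h22 : (Matrix.fromBlocks A B C D)⁻¹ (Sum.inr i) (Sum.inr j) = S⁻¹ i j := by
        rw [← Matrix.invOf_eq_nonsing_inv (Matrix.fromBlocks A B C D),
          Matrix.invOf_fromBlocks₁₁_eq A B C D, Matrix.fromBlocks_apply₂₂, hSinvOf]
      have h23 : M⁻¹ (Sum.inr i) (Sum.inr j) = S⁻¹ i j := by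
        rw [hMdef]
        exact h22
      rw [← h23]
      exact hMinv (Sum.inr i) (Sum.inr j)
    exact ⟨hAstable, (stable_iff S hSzz).mpr ⟨hUS, hSinv⟩⟩
  · rintro ⟨hAst, hSst⟩
    obtain ⟨hUA, hAinv⟩ := (stable_iff A hAz).mp hAst
    have hSzz := hSz hAinv
    obtain ⟨hUS, hSinv⟩ := (stable_iff S hSzz).mp hSst
    have hUS' : IsUnit (D - C * ⅟A * B) := by
      rw [hiA, ← hSdef]
      exact hUS
    obtain ⟨iS'⟩ := hUS'.nonempty_invertible
    letI := iS'
    letI iM : Invertible (Matrix.fromBlocks A B C D) := Matrix.fromBlocks₁₁Invertible A B C D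
    have hUM : IsUnit M := by
      rw [hMdef]
      exact isUnit_of_invertible _
    have hSinvOf : ⅟(D - C * ⅟A * B) = S⁻¹ := by
      rw [Matrix.invOf_eq_nonsing_inv, hSdef, hiA]
    have hMinvBlocks : M⁻¹ = Matrix.fromBlocks
        (A⁻¹ + A⁻¹ * B * S⁻¹ * C * A⁻¹) (-(A⁻¹ * B * S⁻¹))
        (-(S⁻¹ * C * A⁻¹)) S⁻¹ := by
      rw [hMdef, ← Matrix.invOf_eq_nonsing_inv (Matrix.fromBlocks A B C D),
        Matrix.invOf_fromBlocks₁₁_eq A B C D, hSinvOf, hiA]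
    have hMinv : ∀ i j, M⁻¹ i j ≤ 0 := by
      intro i j
      rw [hMinvBlocks]
      rcases i with i | i <;> rcases j with j | j
      · simp only [Matrix.fromBlocks_apply₁₁, Matrix.add_apply]
        have t1 : A⁻¹ i j ≤ 0 := hAinv i j
        have t2 : (A⁻¹ * B * S⁻¹ * C * A⁻¹) i j ≤ 0 :=
          mul_np (mul_nn (mul_pp (mul_pn hAinv hB) hSinv) hC) hAinv i j
        linarith
      · simp only [Matrix.fromBlocks_apply₁₂, Matrix.neg_apply]
        have := mul_pp (mul_pn hAinv hB) hSinv i j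
        linarith
      · simp only [Matrix.fromBlocks_apply₂₁, Matrix.neg_apply]
        have := mul_pp (mul_pn hSinv hC) hAinv i j
        linarith
      · simp only [Matrix.fromBlocks_apply₂₂]
        exact hSinv i j
    exact (stable_iff M hMzM).mpr ⟨hUM, hMinv⟩
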